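/- Let r : [−δ₋, δ₊] → [1, ∞) be continuous with r(0) = 1, strictly increasing on [0, δ₊], strictly decreasing on [−δ₋, 0], and such that ∫_{−δ₋}^{δ₊} 1/(r(θ)−1) dθ < ∞ (with r(θ) > 1 for θ ≠ 0). Then limsup_{θ → 0⁺} θ/(r(θ)−1) = 0 and limsup_{θ → 0⁻} |θ|/(r(θ)−1) = 0. -/

import Mathlib

open Filter MeasureTheory

theorem vtype_curve_tendsto (δm δp : ℝ) (hδm : 0 < δm) (hδm' : δm < Real.pi)
    (hδp : 0 < δp) (hδp' : δp < Real.pi) (r : ℝ → ℝ)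
    (hcont : ContinuousOn r (Set.Icc (-δm) δp))
    (hge : ∀ θ ∈ Set.Icc (-δm) δp, 1 ≤ r θ)
    (hr0 : r 0 = 1)
    (hmono : StrictMonoOn r (Set.Icc 0 δp))
    (hanti : StrictAntiOn r (Set.Icc (-δm) 0))
    (hgt : ∀ θ ∈ Set.Icc (-δm) δp, θ ≠ 0 → 1 < r θ)
    (hint : IntegrableOn (fun θ => 1 / (r θ - 1)) (Set.Icc (-δm) δp)) :
    Tendsto (fun θ => θ / (r θ - 1)) (nhdsWithin 0 (Set.Ioi 0)) (nhds 0) ∧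
      Tendsto (fun θ => |θ| / (r θ - 1)) (nhdsWithin 0 (Set.Iio 0)) (nhds 0) := by
  set f : ℝ → ℝ := fun θ => 1 / (r θ - 1) with hf
  have hf_nonneg : ∀ θ ∈ Set.Icc (-δm) δp, 0 ≤ f θ := fun θ hθ =>
    div_nonneg zero_le_one (by linarith [hge θ hθ])
  constructor
  · -- positive side
    set F : ℝ → ℝ := fun x => ∫ t in Set.Ioc 0 x, f t with hF
    have hintP : IntegrableOn f (Set.Icc 0 δp) :=
      hint.mono_set (Set.Icc_subset_Icc (by linarith) le_rfl)
    have hFcont : ContinuousOn F (Set.Icc 0 δp) :=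
      intervalIntegral.continuousOn_primitive hintP
    have hF0 : F 0 = 0 := by simp [hF]
    have hFt : Tendsto F (nhdsWithin 0 (Set.Ioi 0)) (nhds 0) := by
      have h1 := (hFcont 0 ⟨le_rfl, hδp.le⟩)
      rw [ContinuousWithinAt, hF0] at h1
      refine h1.mono_left ?_
      rw [← nhdsWithin_Ioc_eq_nhdsGT hδp]
      exact nhdsWithin_mono _ Set.Ioc_subset_Icc_self
    have hbound : ∀ θ ∈ Set.Ioc 0 δp, θ / (r θ - 1) ≤ 2 * F θ := by
      intro θ hθ
      have hθ0 : 0 < θ := hθ.1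
      have hθmem : θ ∈ Set.Icc (-δm) δp := ⟨by linarith, hθ.2⟩
      have hrθ : 1 < r θ := hgt θ hθmem hθ0.ne'
      have hsub : Set.Ioc (θ/2) θ ⊆ Set.Icc 0 δp := fun t ht =>
        ⟨by linarith [ht.1], le_trans ht.2 hθ.2⟩
      have h1 : f θ * (volume (Set.Ioc (θ/2) θ)).toReal ≤ ∫ t in Set.Ioc (θ/2) θ, f t := by
        apply setIntegral_ge_of_const_le_real measurableSet_Ioc (measure_Ioc_lt_top).ne
        · intro t ht
          have htmem : t ∈ Set.Icc 0 δp := hsub ht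
          have hrt : 1 < r t := hgt t ⟨by linarith [htmem.1], htmem.2⟩ (by nlinarith [ht.1])
          have : r t ≤ r θ := (hmono.monotoneOn) htmem ⟨hθ0.le, hθ.2⟩ ht.2
          exact one_div_le_one_div_of_le (by linarith) (by linarith)
        · exact hintP.mono_set hsub
      have hvol : (volume (Set.Ioc (θ/2) θ)).toReal = θ/2 := by
        rw [Real.volume_Ioc, ENNReal.toReal_ofReal (by linarith)]
        ring
      have h2 : (∫ t in Set.Ioc (θ/2) θ, f t) ≤ F θ := by
        apply setIntegral_mono_set (hintP.mono_set (Set.Ioc_subset_Icc_self.trans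
          (Set.Icc_subset_Icc le_rfl hθ.2)))
        · filter_upwards [ae_restrict_mem measurableSet_Ioc] with t ht
          exact hf_nonneg t ⟨by linarith [ht.1], le_trans ht.2 hθ.2⟩
        · exact HasSubset.Subset.eventuallyLE (Set.Ioc_subset_Ioc (by linarith) le_rfl)
      rw [hvol] at h1
      have hd : r θ - 1 ≠ 0 := by linarith
      have : θ / (r θ - 1) = 2 * (f θ * (θ/2)) := by
        rw [hf]; field_simp
      rw [this]; linarith
    apply squeeze_zero'
    · filter_upwards [Ioc_mem_nhdsGT_of_mem ⟨le_rfl, hδp⟩] with θ hθ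
      exact div_nonneg hθ.1.le (by linarith [hge θ ⟨by linarith [hθ.1], hθ.2⟩])
    · filter_upwards [Ioc_mem_nhdsGT_of_mem ⟨le_rfl, hδp⟩] with θ hθ
      exact hbound θ hθ
    · simpa using hFt.const_mul 2
  · -- negative side
    set G : ℝ → ℝ := fun x => ∫ t in Set.Ioc x 0, f t with hG
    have hintM : IntegrableOn f (Set.Icc (-δm) 0) :=
      hint.mono_set (Set.Icc_subset_Icc le_rfl hδp.le)
    have hGcont : ContinuousOn G (Set.Icc (-δm) 0) := by
      have h := intervalIntegral.continuousOn_primitive_interval_left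
        (f := f) (a := -δm) (b := 0) (μ := volume)
        (by rwa [Set.uIcc_of_le (by linarith : -δm ≤ (0:ℝ))])
      rw [Set.uIcc_of_le (by linarith : -δm ≤ (0:ℝ))] at h
      refine h.congr fun x hx => ?_
      dsimp only; rw [intervalIntegral.integral_of_le hx.2]
    have hG0 : G 0 = 0 := by simp [hG]
    have hGt : Tendsto G (nhdsWithin 0 (Set.Iio 0)) (nhds 0) := by
      have h1 := (hGcont 0 ⟨by linarith, le_rfl⟩)
      rw [ContinuousWithinAt, hG0] at h1
      refine h1.mono_left ?_
      rw [← nhdsWithin_Ico_eq_nhdsLT (by linarith : -δm < (0:ℝ))]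
      exact nhdsWithin_mono _ Set.Ico_subset_Icc_self
    have hbound : ∀ θ ∈ Set.Ico (-δm) 0, |θ| / (r θ - 1) ≤ 2 * G θ := by
      intro θ hθ
      have hθ0 : θ < 0 := hθ.2
      have hθmem : θ ∈ Set.Icc (-δm) δp := ⟨hθ.1, by linarith⟩
      have hrθ : 1 < r θ := hgt θ hθmem hθ0.ne
      have hsub : Set.Ioc θ (θ/2) ⊆ Set.Icc (-δm) 0 := fun t ht =>
        ⟨le_trans hθ.1 ht.1.le, by linarith [ht.2]⟩
      have h1 : f θ * (volume (Set.Ioc θ (θ/2))).toReal ≤ ∫ t in Set.Ioc θ (θ/2), f t := by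
        apply setIntegral_ge_of_const_le_real measurableSet_Ioc (measure_Ioc_lt_top).ne
        · intro t ht
          have htmem : t ∈ Set.Icc (-δm) 0 := hsub ht
          have hrt : 1 < r t := hgt t ⟨htmem.1, by linarith [htmem.2]⟩ (by nlinarith [ht.2])
          have : r t ≤ r θ := (hanti.antitoneOn) ⟨hθ.1, hθ0.le⟩ htmem ht.1.le
          exact one_div_le_one_div_of_le (by linarith) (by linarith)
        · exact hintM.mono_set hsub
      have hvol : (volume (Set.Ioc θ (θ/2))).toReal = -θ/2 := by
        rw [Real.volume_Ioc, ENNReal.toReal_ofReal (by linarith)]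
        ring
      have h2 : (∫ t in Set.Ioc θ (θ/2), f t) ≤ G θ := by
        apply setIntegral_mono_set (hintM.mono_set (Set.Ioc_subset_Icc_self.trans
          (Set.Icc_subset_Icc hθ.1 le_rfl)))
        · filter_upwards [ae_restrict_mem measurableSet_Ioc] with t ht
          exact hf_nonneg t ⟨le_trans hθ.1 ht.1.le, by linarith [ht.2]⟩
        · exact HasSubset.Subset.eventuallyLE (Set.Ioc_subset_Ioc le_rfl (by linarith))
      rw [hvol] at h1
      have : |θ| / (r θ - 1) = 2 * (f θ * (-θ/2)) := by
        have hd : r θ - 1 ≠ 0 := by linarith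
        rw [abs_of_neg hθ0, hf]; field_simp
      rw [this]; linarith
    apply squeeze_zero'
    · filter_upwards [Ico_mem_nhdsLT_of_mem (show (0:ℝ) ∈ Set.Ioc (-δm) 0 from ⟨by linarith, le_rfl⟩)] with θ hθ
      exact div_nonneg (abs_nonneg θ) (by linarith [hge θ ⟨hθ.1, by linarith [hθ.2]⟩])
    · filter_upwards [Ico_mem_nhdsLT_of_mem (show (0:ℝ) ∈ Set.Ioc (-δm) 0 from ⟨by linarith, le_rfl⟩)] with θ hθ
      exact hbound θ hθ
    · simpa using hGt.const_mul 2
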